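/- For the Gaussian output channel P_out(y|λ) = exp(−(y−λ)²/(2Δ))/√(2πΔ), the replica-symmetric energetic potential φ(K; K_d) = ∫ dy E_{ξ,u⁰} P_out(y | ξ√K + u⁰√(K_d−K)) · ln E_u P_out(y | ξ√K + u√(K_d−K)), with ξ, u⁰, u i.i.d. N(0,1), equals −(1/2) ln[2πe(Δ + K_d − K)] for 0 ≤ K ≤ K_d. -/

import Mathlib

open MeasureTheory ProbabilityTheory Real
open scoped ENNReal NNReal

lemma integrable_sq_exp {b : ℝ} (hb : 0 < b) :
    Integrable (fun x : ℝ => x ^ 2 * Real.exp (-b * x ^ 2)) := by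
  have := integrable_rpow_mul_exp_neg_mul_sq hb (s := 2) (by norm_num)
  have h : ∀ x : ℝ, x ^ (2 : ℝ) = x ^ 2 := fun x => Real.rpow_natCast x 2
  simpa [h] using this

lemma int_sq_exp {b : ℝ} (hb : 0 < b) :
    ∫ x : ℝ, x ^ 2 * Real.exp (-b * x ^ 2) = Real.sqrt (π / b) / (2 * b) := by
  have hderiv : ∀ x : ℝ, HasDerivAt (fun x : ℝ => x * Real.exp (-b * x ^ 2))
      (Real.exp (-b * x ^ 2) - 2 * b * (x ^ 2 * Real.exp (-b * x ^ 2))) x := by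
    intro x
    have h1 : HasDerivAt (fun x : ℝ => -b * x ^ 2) (-b * (2 * x)) x := by
      simpa using ((hasDerivAt_pow 2 x).const_mul (-b))
    have h2 := (hasDerivAt_id' x).mul h1.exp
    refine h2.congr_deriv ?_
    ring
  have hf' : Integrable (fun x : ℝ =>
      Real.exp (-b * x ^ 2) - 2 * b * (x ^ 2 * Real.exp (-b * x ^ 2))) :=
    (integrable_exp_neg_mul_sq hb).sub ((integrable_sq_exp hb).const_mul _)
  have hf : Integrable (fun x : ℝ => x * Real.exp (-b * x ^ 2)) :=
    integrable_mul_exp_neg_mul_sq hb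
  have h0 := integral_eq_zero_of_hasDerivAt_of_integrable hderiv hf' hf
  rw [integral_sub (integrable_exp_neg_mul_sq hb) ((integrable_sq_exp hb).const_mul _),
    integral_const_mul, integral_gaussian] at h0
  have hb' : (2 : ℝ) * b ≠ 0 := by positivity
  field_simp at h0 ⊢
  linarith

lemma gaussPDF_nnreal :
    (gaussianPDF 0 1) = fun x => ((Real.toNNReal (gaussianPDFReal 0 1 x) : ℝ≥0) : ℝ≥0∞) := by
  funext x
  rw [gaussianPDF_def]
  simp [ENNReal.ofReal]

lemma integral_gauss_std (g : ℝ → ℝ) :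
    ∫ x, g x ∂(gaussianReal 0 1) = ∫ x, gaussianPDFReal 0 1 x * g x := by
  rw [gaussianReal_of_var_ne_zero 0 one_ne_zero, gaussPDF_nnreal,
    integral_withDensity_eq_integral_smul
      ((measurable_gaussianPDFReal 0 1).real_toNNReal) g]
  congr 1
  funext x
  rw [NNReal.smul_def, smul_eq_mul, Real.coe_toNNReal _ (gaussianPDFReal_nonneg 0 1 x)]

lemma integrable_gauss_std {g : ℝ → ℝ}
    (h : Integrable (fun x => gaussianPDFReal 0 1 x * g x)) :
    Integrable g (gaussianReal 0 1) := by
  rw [gaussianReal_of_var_ne_zero 0 one_ne_zero, gaussPDF_nnreal,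
    integrable_withDensity_iff_integrable_smul
      ((measurable_gaussianPDFReal 0 1).real_toNNReal)]
  refine h.congr (Filter.Eventually.of_forall fun x => ?_)
  simp only [NNReal.smul_def, smul_eq_mul, Real.coe_toNNReal _ (gaussianPDFReal_nonneg 0 1 x)]

lemma conv_gauss {Δ s : ℝ} (hΔ : 0 < Δ) (c : ℝ) :
    ∫ u, Real.exp (-(c - u * s) ^ 2 / (2 * Δ)) / Real.sqrt (2 * π * Δ)
        ∂(gaussianReal 0 1)
      = Real.exp (-c ^ 2 / (2 * (Δ + s ^ 2))) / Real.sqrt (2 * π * (Δ + s ^ 2)) := by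
  set V : ℝ := Δ + s ^ 2 with hVdef
  have hV : 0 < V := by positivity
  set b : ℝ := V / (2 * Δ) with hbdef
  have hb : 0 < b := by positivity
  set μ : ℝ := c * s / V with hμdef
  rw [integral_gauss_std]
  have hpt : ∀ u : ℝ, gaussianPDFReal 0 1 u *
      (Real.exp (-(c - u * s) ^ 2 / (2 * Δ)) / Real.sqrt (2 * π * Δ))
      = (Real.exp (-c ^ 2 / (2 * V)) / (Real.sqrt (2 * π) * Real.sqrt (2 * π * Δ)))
        * Real.exp (-b * (u - μ) ^ 2) := by
    intro u
    rw [gaussianPDFReal_def]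
    have hexp : Real.exp (-(u - 0) ^ 2 / (2 * (1:ℝ≥0))) *
        Real.exp (-(c - u * s) ^ 2 / (2 * Δ))
        = Real.exp (-c ^ 2 / (2 * V)) * Real.exp (-b * (u - μ) ^ 2) := by
      rw [← Real.exp_add, ← Real.exp_add]
      congr 1
      rw [hμdef, hbdef, hVdef]
      have h1 : Δ + s ^ 2 ≠ 0 := ne_of_gt hV
      have h2 : Δ ≠ 0 := ne_of_gt hΔ
      push_cast
      field_simp
      ring
    push_cast at hexp ⊢
    calc (Real.sqrt (2 * π * 1))⁻¹ * Real.exp (-(u - 0) ^ 2 / (2 * 1)) *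
          (Real.exp (-(c - u * s) ^ 2 / (2 * Δ)) / Real.sqrt (2 * π * Δ))
        = (Real.exp (-(u - 0) ^ 2 / (2 * 1)) * Real.exp (-(c - u * s) ^ 2 / (2 * Δ)))
            / (Real.sqrt (2 * π) * Real.sqrt (2 * π * Δ)) := by
          rw [mul_one]; ring
      _ = _ := by rw [hexp]; ring
  rw [integral_congr_ae (Filter.Eventually.of_forall hpt), integral_const_mul]
  have htrans : ∫ u : ℝ, Real.exp (-b * (u - μ) ^ 2) = ∫ u : ℝ, Real.exp (-b * u ^ 2) :=
    integral_sub_right_eq_self (fun u : ℝ => Real.exp (-b * u ^ 2)) μ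
  rw [htrans, integral_gaussian]
  have h1 : π / b = 2 * π * Δ / V := by
    rw [hbdef]; field_simp
  rw [h1, Real.sqrt_div' _ hV.le]
  have h2π : (0:ℝ) < 2 * π := by positivity
  rw [Real.sqrt_mul h2π.le V, Real.sqrt_mul h2π.le Δ]
  have hs2π : (0:ℝ) < Real.sqrt (2 * π) := Real.sqrt_pos.mpr h2π
  have hsΔ : (0:ℝ) < Real.sqrt Δ := Real.sqrt_pos.mpr hΔ
  have hsV : (0:ℝ) < Real.sqrt V := Real.sqrt_pos.mpr hV
  field_simp

lemma G_decomp {V : ℝ} (hV : 0 < V) (C : ℝ) (t : ℝ) :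
    (Real.exp (-t ^ 2 / (2 * V)) / Real.sqrt (2 * π * V)) * (-t ^ 2 / (2 * V) - C)
      = (-(2 * V * Real.sqrt (2 * π * V))⁻¹) * (t ^ 2 * Real.exp (-(2 * V)⁻¹ * t ^ 2))
        + (-C / Real.sqrt (2 * π * V)) * Real.exp (-(2 * V)⁻¹ * t ^ 2) := by
  have hS : (0:ℝ) < Real.sqrt (2 * π * V) := Real.sqrt_pos.mpr (by positivity)
  have he : -t ^ 2 / (2 * V) = -(2 * V)⁻¹ * t ^ 2 := by field_simp
  rw [he]
  rw [mul_inv]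
  field_simp
  ring

lemma integrable_G {V : ℝ} (hV : 0 < V) (C : ℝ) :
    Integrable (fun t : ℝ =>
      (Real.exp (-t ^ 2 / (2 * V)) / Real.sqrt (2 * π * V)) * (-t ^ 2 / (2 * V) - C)) := by
  have hb : (0:ℝ) < (2 * V)⁻¹ := by positivity
  have base : Integrable (fun t : ℝ =>
      (-(2 * V * Real.sqrt (2 * π * V))⁻¹) * (t ^ 2 * Real.exp (-(2 * V)⁻¹ * t ^ 2))
        + (-C / Real.sqrt (2 * π * V)) * Real.exp (-(2 * V)⁻¹ * t ^ 2)) :=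
    ((integrable_sq_exp hb).const_mul _).add ((integrable_exp_neg_mul_sq hb).const_mul _)
  exact base.congr (Filter.Eventually.of_forall fun t => (G_decomp hV C t).symm)

lemma int_G {V : ℝ} (hV : 0 < V) (C a : ℝ) :
    ∫ y : ℝ, (Real.exp (-(y - a) ^ 2 / (2 * V)) / Real.sqrt (2 * π * V)) *
        (-(y - a) ^ 2 / (2 * V) - C)
      = -(1 / 2) - C := by
  set b : ℝ := (2 * V)⁻¹ with hbdef
  have hb : 0 < b := by positivity
  have htrans := integral_sub_right_eq_self (μ := volume)
    (fun t : ℝ => (Real.exp (-t ^ 2 / (2 * V)) / Real.sqrt (2 * π * V)) *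
      (-t ^ 2 / (2 * V) - C)) a
  rw [htrans]
  have hS : (0:ℝ) < Real.sqrt (2 * π * V) := Real.sqrt_pos.mpr (by positivity)
  simp only [G_decomp hV C]
  rw [integral_add (((integrable_sq_exp hb).const_mul _))
    ((integrable_exp_neg_mul_sq hb).const_mul _),
    integral_const_mul, integral_const_mul, int_sq_exp hb, integral_gaussian]
  have h2 : π / b = 2 * π * V := by rw [hbdef]; field_simp
  rw [h2]
  have h3 : (2 : ℝ) * b = V⁻¹ := by rw [hbdef]; field_simp
  rw [h3]
  field_simp
  ring

lemma integrable_quad_gauss (a c : ℝ) :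
    Integrable (fun ξ : ℝ => (a - ξ * c) ^ 2) (gaussianReal 0 1) := by
  apply integrable_gauss_std
  have hb : (0:ℝ) < 1/2 := by norm_num
  have base : Integrable (fun ξ : ℝ =>
      ((Real.sqrt (2*π))⁻¹ * a ^ 2) * Real.exp (-(1/2) * ξ ^ 2)
      + (-((Real.sqrt (2*π))⁻¹ * (2*a*c))) * (ξ * Real.exp (-(1/2) * ξ ^ 2))
      + ((Real.sqrt (2*π))⁻¹ * c ^ 2) * (ξ ^ 2 * Real.exp (-(1/2) * ξ ^ 2))) :=
    (((integrable_exp_neg_mul_sq hb).const_mul _).add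
      ((integrable_mul_exp_neg_mul_sq hb).const_mul _)).add
      ((integrable_sq_exp hb).const_mul _)
  refine base.congr (Filter.Eventually.of_forall fun ξ => ?_)
  rw [gaussianPDFReal_def]
  push_cast
  rw [show ((2:ℝ) * π * 1) = 2 * π by ring,
    show (-(ξ - 0) ^ 2 / (2 * 1) : ℝ) = -(1/2) * ξ ^ 2 by ring]
  ring

/-- For the Gaussian output channel `P_out(y|λ) = exp(−(y−λ)²/(2Δ))/√(2πΔ)`, the
replica-symmetric energetic potential
`φ(K;K_d) = ∫ dy E_{ξ,u⁰} P_out(y|ξ√K + u⁰√(K_d−K)) ln E_u P_out(y|ξ√K + u√(K_d−K))`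
equals `−(1/2) ln[2πe(Δ + K_d − K)]`. -/
theorem gaussian_channel_energetic_potential (Δ K Kd : ℝ)
    (hΔ : 0 < Δ) (hK : 0 ≤ K) (hKKd : K ≤ Kd) :
    let Pout : ℝ → ℝ → ℝ :=
      fun y lam => Real.exp (-(y - lam) ^ 2 / (2 * Δ)) / Real.sqrt (2 * Real.pi * Δ)
    ∫ y : ℝ, ∫ p : ℝ × ℝ,
        Pout y (p.1 * Real.sqrt K + p.2 * Real.sqrt (Kd - K)) *
          Real.log (∫ u, Pout y (p.1 * Real.sqrt K + u * Real.sqrt (Kd - K))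
            ∂(gaussianReal 0 1))
      ∂((gaussianReal 0 1).prod (gaussianReal 0 1))
      = -(1 / 2) * Real.log (2 * Real.pi * Real.exp 1 * (Δ + Kd - K)) := by
  intro Pout
  have hPout : Pout = fun y lam =>
      Real.exp (-(y - lam) ^ 2 / (2 * Δ)) / Real.sqrt (2 * π * Δ) := rfl
  set γ : Measure ℝ := gaussianReal 0 1 with hγ
  set s : ℝ := Real.sqrt (Kd - K) with hs
  set k : ℝ := Real.sqrt K with hk
  have hs2 : s ^ 2 = Kd - K := Real.sq_sqrt (sub_nonneg.mpr hKKd)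
  set V : ℝ := Δ + s ^ 2 with hVdef
  have hV : 0 < V := by positivity
  have hπV : (0:ℝ) < 2 * π * V := by positivity
  have hπΔ : (0:ℝ) < 2 * π * Δ := by positivity
  have hsπV : (0:ℝ) < Real.sqrt (2 * π * V) := Real.sqrt_pos.mpr hπV
  have hsπΔ : (0:ℝ) < Real.sqrt (2 * π * Δ) := Real.sqrt_pos.mpr hπΔ
  set CC : ℝ := Real.log (Real.sqrt (2 * π * V)) with hCC
  set M : ℝ := (Real.sqrt (2 * π * Δ))⁻¹ with hM
  -- bounds on Pout
  have hPnn : ∀ y lam, 0 ≤ Pout y lam := fun y lam => by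
    simp only [hPout]; positivity
  have hPle : ∀ y lam, Pout y lam ≤ M := fun y lam => by
    simp only [hPout, hM]
    rw [← one_div]
    gcongr
    exact Real.exp_le_one_iff.mpr (div_nonpos_of_nonpos_of_nonneg
      (neg_nonpos.mpr (by positivity)) (by positivity))
  -- inner convolution
  have hinner : ∀ (y A : ℝ), (∫ u, Pout y (A + u * s) ∂γ)
      = Real.exp (-(y - A) ^ 2 / (2 * V)) / Real.sqrt (2 * π * V) := by
    intro y A
    rw [hVdef, hγ]
    rw [show (fun u => Pout y (A + u * s))
        = fun u => Real.exp (-((y - A) - u * s) ^ 2 / (2 * Δ)) / Real.sqrt (2 * π * Δ) from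
      funext fun u => by simp only [hPout]; ring_nf]
    exact conv_gauss hΔ (y - A)
  have hlog : ∀ c : ℝ, Real.log (Real.exp (-c ^ 2 / (2 * V)) / Real.sqrt (2 * π * V))
      = -c ^ 2 / (2 * V) - CC := by
    intro c
    rw [Real.log_div (Real.exp_ne_zero _) (ne_of_gt hsπV), Real.log_exp, hCC]
  -- integrability of the log factor wrt γ
  have hL : ∀ y : ℝ, Integrable (fun ξ : ℝ => -(y - ξ * k) ^ 2 / (2 * V) - CC) γ := by
    intro y
    have h1 : Integrable (fun ξ : ℝ => (y - ξ * k) ^ 2 / (2 * V)) γ :=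
      (integrable_quad_gauss y k).div_const (2 * V)
    refine (h1.neg.sub (integrable_const CC)).congr
      (Filter.Eventually.of_forall fun ξ => ?_)
    simp only [Pi.neg_apply, Pi.sub_apply]
    ring
  -- integrability on the product measure
  have hprod_int : ∀ y : ℝ, Integrable
      (fun p : ℝ × ℝ => Pout y (p.1 * k + p.2 * s) * (-(y - p.1 * k) ^ 2 / (2 * V) - CC))
      (γ.prod γ) := by
    intro y
    have haesm : AEStronglyMeasurable
        (fun p : ℝ × ℝ => Pout y (p.1 * k + p.2 * s) * (-(y - p.1 * k) ^ 2 / (2 * V) - CC))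
        (γ.prod γ) := by
      apply Continuous.aestronglyMeasurable
      simp only [hPout]
      fun_prop
    have hB1 : Integrable (fun ξ : ℝ => M * |(-(y - ξ * k) ^ 2 / (2 * V) - CC)|) γ :=
      ((hL y).abs.const_mul M)
    have hmap : Measure.map Prod.fst (γ.prod γ) = γ := by
      rw [Measure.map_fst_prod]
      simp
    have hB : Integrable (fun p : ℝ × ℝ => M * |(-(y - p.1 * k) ^ 2 / (2 * V) - CC)|)
        (γ.prod γ) := by
      have := (integrable_map_measure (f := Prod.fst)
        (g := fun ξ : ℝ => M * |(-(y - ξ * k) ^ 2 / (2 * V) - CC)|)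
        (by rw [hmap]; exact hB1.aestronglyMeasurable) measurable_fst.aemeasurable).mp
        (by rwa [hmap])
      exact this
    refine hB.mono' haesm (Filter.Eventually.of_forall fun p => ?_)
    rw [norm_mul, Real.norm_eq_abs, Real.norm_eq_abs,
      abs_of_nonneg (hPnn y _)]
    have h2 : (0:ℝ) ≤ |(-(y - p.1 * k) ^ 2 / (2 * V) - CC)| := abs_nonneg _
    calc Pout y (p.1 * k + p.2 * s) * |(-(y - p.1 * k) ^ 2 / (2 * V) - CC)|
        ≤ M * |(-(y - p.1 * k) ^ 2 / (2 * V) - CC)| :=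
          mul_le_mul_of_nonneg_right (hPle y _) h2
      _ ≤ M * |(-(y - p.1 * k) ^ 2 / (2 * V) - CC)| := le_refl _
  -- middle step
  have hmid : ∀ y : ℝ, (∫ p : ℝ × ℝ,
        Pout y (p.1 * k + p.2 * s) * Real.log (∫ u, Pout y (p.1 * k + u * s) ∂γ)
        ∂(γ.prod γ))
      = ∫ ξ, (Real.exp (-(y - ξ * k) ^ 2 / (2 * V)) / Real.sqrt (2 * π * V)) *
          (-(y - ξ * k) ^ 2 / (2 * V) - CC) ∂γ := by
    intro y
    have hpt : ∀ p : ℝ × ℝ,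
        Pout y (p.1 * k + p.2 * s) * Real.log (∫ u, Pout y (p.1 * k + u * s) ∂γ)
        = Pout y (p.1 * k + p.2 * s) * (-(y - p.1 * k) ^ 2 / (2 * V) - CC) := by
      intro p
      rw [hinner y (p.1 * k), hlog]
    calc ∫ p : ℝ × ℝ,
          Pout y (p.1 * k + p.2 * s) * Real.log (∫ u, Pout y (p.1 * k + u * s) ∂γ)
          ∂(γ.prod γ)
        = ∫ p : ℝ × ℝ, Pout y (p.1 * k + p.2 * s) * (-(y - p.1 * k) ^ 2 / (2 * V) - CC)
            ∂(γ.prod γ) := integral_congr_ae (Filter.Eventually.of_forall hpt)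
      _ = ∫ ξ, ∫ w, Pout y (ξ * k + w * s) * (-(y - ξ * k) ^ 2 / (2 * V) - CC) ∂γ ∂γ :=
          integral_prod _ (hprod_int y)
      _ = ∫ ξ, (∫ w, Pout y (ξ * k + w * s) ∂γ) * (-(y - ξ * k) ^ 2 / (2 * V) - CC) ∂γ :=
          integral_congr_ae (Filter.Eventually.of_forall fun ξ => integral_mul_const _ _)
      _ = _ := integral_congr_ae (Filter.Eventually.of_forall fun ξ => by
          simp only [hinner y (ξ * k)])
  -- swap and conclude
  set Gf : ℝ → ℝ := fun t =>
    (Real.exp (-t ^ 2 / (2 * V)) / Real.sqrt (2 * π * V)) * (-t ^ 2 / (2 * V) - CC)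
    with hGf
  have hGint : Integrable Gf := by rw [hGf]; exact integrable_G hV CC
  have hGcont : Continuous Gf := by
    rw [hGf]
    fun_prop
  have step1 : (∫ y : ℝ, ∫ p : ℝ × ℝ,
        Pout y (p.1 * k + p.2 * s) * Real.log (∫ u, Pout y (p.1 * k + u * s) ∂γ)
        ∂(γ.prod γ))
      = ∫ y : ℝ, ∫ ξ, Gf (y - ξ * k) ∂γ := by
    refine integral_congr_ae (Filter.Eventually.of_forall fun y => ?_)
    simp only [hmid y]
    rfl
  rw [step1]
  have huncurry : Integrable (Function.uncurry fun y ξ => Gf (y - ξ * k))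
      ((volume : Measure ℝ).prod γ) := by
    refine (integrable_prod_iff' ?_).mpr ⟨?_, ?_⟩
    · exact (hGcont.comp
        (continuous_fst.sub (continuous_snd.mul continuous_const))).aestronglyMeasurable
    · exact Filter.Eventually.of_forall fun ξ => by
        simpa using hGint.comp_sub_right (ξ * k)
    · have hconst : (fun ξ : ℝ => ∫ y : ℝ, ‖Function.uncurry (fun y ξ => Gf (y - ξ * k)) (y, ξ)‖)
          = fun ξ : ℝ => ∫ t : ℝ, ‖Gf t‖ := by
        funext ξ
        exact integral_sub_right_eq_self (fun t => ‖Gf t‖) (ξ * k)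
      rw [hconst]
      exact integrable_const _
  rw [integral_integral_swap huncurry]
  have step2 : (∫ ξ, ∫ y : ℝ, Gf (y - ξ * k) ∂volume ∂γ) = ∫ _ξ : ℝ, (-(1/2) - CC) ∂γ := by
    refine integral_congr_ae (Filter.Eventually.of_forall fun ξ => ?_)
    rw [hGf]
    exact int_G hV CC (ξ * k)
  rw [step2, integral_const]
  have hprob : IsProbabilityMeasure γ := by rw [hγ]; infer_instance
  rw [probReal_univ]
  simp only [ENNReal.toReal_one, one_smul]
  -- final algebra
  have hW : Δ + Kd - K = V := by rw [hVdef, hs2]; ring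
  rw [show (2 * π * Real.exp 1 * (Δ + Kd - K) : ℝ) = (2 * π * V) * Real.exp 1 by
    rw [hW]; ring]
  rw [Real.log_mul (ne_of_gt hπV) (Real.exp_ne_zero 1), Real.log_exp, hCC,
    Real.log_sqrt hπV.le]
  ring
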